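/- Let Φ be a multi-Hilbertian space, J = [0,∞) or J = [0,T], and let X = {X_t}_{t∈J} and Y = {Y_t}_{t∈J} be Φ'_β-valued regular stochastic processes such that for each φ ∈ Φ, the real-valued process X[φ] = {X_t[φ]}_{t∈J} is a version of {Y_t[φ]}_{t∈J}. Then X is a version of Y (i.e., X_t = Y_t P-a.e. for each t ∈ J). Furthermore, if X and Y are both right-continuous (P-a.e. sample path t ↦ X_t(ω) ∈ Φ'_β is right-continuous, and likewise for Y), then X and Y are indistinguishable processes. -/

import Mathlib

open MeasureTheory Topology Filter Set
open scoped ENNReal NNReal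

noncomputable section

namespace Paper

universe u

variable {Φ : Type*} [AddCommGroup Φ] [Module ℝ Φ]

/-- A seminorm `p` is *Hilbertian* if `p(φ)² = Q(φ,φ)` for a symmetric non-negative
bilinear form `Q` on `Φ × Φ`. -/
def IsHilbertian (p : Seminorm ℝ Φ) : Prop :=
  ∃ Q : Φ →ₗ[ℝ] Φ →ₗ[ℝ] ℝ, (∀ x y, Q x y = Q y x) ∧ (∀ x, 0 ≤ Q x x) ∧ ∀ x, (p x) ^ 2 = Q x x

/-- The Hilbert space `Φ_p` (the completion of `Φ/ker p`) is separable; intrinsically: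
there is a countable `p`-dense subset of `Φ`. -/
def HasSeparableQuotient (p : Seminorm ℝ Φ) : Prop :=
  ∃ D : Set Φ, D.Countable ∧ ∀ x : Φ, ∀ ε : ℝ, 0 < ε → ∃ y ∈ D, p (x - y) < ε

/-- The polarization form associated to a Hilbertian seminorm `q`. -/
def polarForm (q : Seminorm ℝ Φ) (x y : Φ) : ℝ :=
  ((q (x + y)) ^ 2 - (q x) ^ 2 - (q y) ^ 2) / 2

/-- For Hilbertian seminorms `p ≤ q`, the canonical inclusion `i_{p,q} : Φ_q → Φ_p` is
Hilbert–Schmidt; intrinsically: the sums `∑ p(φᵢ)²` over finite `q`-orthonormal families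
are uniformly bounded. -/
def IsHilbertSchmidtPair (p q : Seminorm ℝ Φ) : Prop :=
  ∃ C : ℝ, ∀ (m : ℕ) (φ : Fin m → Φ),
    (∀ i j, polarForm q (φ i) (φ j) = if i = j then 1 else 0) →
    ∑ i, (p (φ i)) ^ 2 ≤ C

/-- A linear functional on `Φ` belongs to the Hilbert space `Φ'_q` (the dual of `Φ_q`)
iff it is `q`-bounded. -/
def MemDualOf (q : Seminorm ℝ Φ) (f : Φ →ₗ[ℝ] ℝ) : Prop :=
  ∃ C : ℝ, ∀ φ, |f φ| ≤ C * q φ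

/-- The dual norm `q'` on `Φ'_q`. -/
def dualNorm (q : Seminorm ℝ Φ) (f : Φ →ₗ[ℝ] ℝ) : ℝ :=
  sSup ((fun φ => |f φ|) '' {φ | q φ ≤ 1})

section TopologySection

variable [TopologicalSpace Φ]

/-- `Φ` is a nuclear space: its topology is generated by a family of Hilbertian seminorms
such that each member is dominated by another one with Hilbert–Schmidt inclusion. -/
def IsNuclearSpace (Φ : Type*) [AddCommGroup Φ] [Module ℝ Φ] [TopologicalSpace Φ] : Prop :=
  ∃ (ι : Type) (hι : Nonempty ι) (fam : SeminormFamily ℝ Φ ι),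
    (haveI := hι; WithSeminorms fam) ∧
    (∀ i, IsHilbertian (fam i)) ∧
    ∀ i, ∃ j, fam i ≤ fam j ∧ IsHilbertSchmidtPair (fam i) (fam j)

/-- `Φ` is multi-Hilbertian: its topology is generated by a family of Hilbertian
seminorms, each with separable associated Hilbert space. -/
def IsMultiHilbertian (Φ : Type*) [AddCommGroup Φ] [Module ℝ Φ] [TopologicalSpace Φ] : Prop :=
  ∃ (ι : Type) (hι : Nonempty ι) (fam : SeminormFamily ℝ Φ ι),
    (haveI := hι; WithSeminorms fam) ∧
    ∀ i, IsHilbertian (fam i) ∧ HasSeparableQuotient (fam i)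

/-- A weaker countably Hilbertian topology `θ` on `Φ`: an increasing sequence of
continuous Hilbertian seminorms with separable associated Hilbert spaces. -/
structure WCHT (Φ : Type*) [AddCommGroup Φ] [Module ℝ Φ] [TopologicalSpace Φ] where
  p : ℕ → Seminorm ℝ Φ
  mono : Monotone p
  hilb : ∀ n, IsHilbertian (p n)
  sep : ∀ n, HasSeparableQuotient (p n)
  cont : ∀ n, Continuous ⇑(p n)

/-- `f ∈ Φ'_θ = ⋃ₙ Φ'_{pₙ}`: `f` is continuous for the countably Hilbertian topology `θ`. -/
def WCHT.MemDual (θ : WCHT Φ) (f : Φ → ℝ) : Prop :=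
  ∃ (n : ℕ) (C : ℝ), ∀ φ, |f φ| ≤ C * θ.p n φ

end TopologySection

/-- Borel measurability of a map into a topological space. -/
def BorelMeasurable {Ω : Type*} [MeasurableSpace Ω] {α : Type*} [TopologicalSpace α]
    (X : Ω → α) : Prop :=
  letI := borel α
  Measurable X

/-- The distribution `μ_X` of `X`, as a Borel measure. -/
def distributionOf {Ω : Type*} [MeasurableSpace Ω] {α : Type*} [TopologicalSpace α]
    (P : Measure Ω) (X : Ω → α) : @Measure α (borel α) :=
  letI := borel α
  P.map X

/-- A Borel measure `μ` is *Radon* if for every Borel set `A` and `ε > 0` there is a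
compact `K ⊆ A` with `μ (A \ K) < ε`. -/
def IsRadon {α : Type*} [TopologicalSpace α] {mα : MeasurableSpace α}
    (μ : @Measure α mα) : Prop :=
  ∀ A : Set α, MeasurableSet[mα] A → ∀ ε : ℝ≥0∞, 0 < ε →
    ∃ K, K ⊆ A ∧ IsCompact K ∧ μ (A \ K) < ε

section ProbSection

variable {Ω : Type*} [MeasurableSpace Ω] [TopologicalSpace Φ]

/-- Continuity of `φ ↦ X(φ)` from `Φ` into `L⁰(Ω,F,P)` (convergence in probability). -/
def ContinuousInProb (P : Measure Ω) (X : Φ → Ω → ℝ) : Prop :=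
  ∀ φ₀ : Φ, ∀ ε : ℝ, 0 < ε → ∃ U ∈ 𝓝 φ₀, ∀ φ ∈ U,
    P {ω | ε ≤ |X φ ω - X φ₀ ω|} < ENNReal.ofReal ε

/-- Equicontinuity of the family `{X_t : t ∈ s}` of (linear) maps `Φ → L⁰(Ω,F,P)`. -/
def EquicontinuousInProb (P : Measure Ω) (X : ℝ → Φ → Ω → ℝ) (s : Set ℝ) : Prop :=
  ∀ ε : ℝ, 0 < ε → ∃ U ∈ 𝓝 (0 : Φ), ∀ t ∈ s, ∀ φ ∈ U,
    P {ω | ε ≤ |X t φ ω|} < ENNReal.ofReal ε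

/-- `p`-continuity of a (linear) map `Φ → L⁰(Ω,F,P)`. -/
def SeminormContinuousInProb (P : Measure Ω) (p : Seminorm ℝ Φ) (X : Φ → Ω → ℝ) : Prop :=
  ∀ ε : ℝ, 0 < ε → ∃ δ : ℝ, 0 < δ ∧ ∀ φ : Φ, p φ < δ →
    P {ω | ε ≤ |X φ ω|} < ENNReal.ofReal ε

/-- A cylindrical process in `Φ'`: for each `t ∈ s`, a linear map `Φ → L⁰(Ω,F,P)`. -/
def IsCylindricalProcess (P : Measure Ω) (X : ℝ → Φ → Ω → ℝ) (s : Set ℝ) : Prop :=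
  (∀ t ∈ s, ∀ φ : Φ, Measurable (X t φ)) ∧
  ∀ t ∈ s, ∀ (a b : ℝ) (φ ψ : Φ), ∀ᵐ ω ∂P,
    X t (a • φ + b • ψ) ω = a * X t φ ω + b * X t ψ ω

/-- A `Φ'_β`-valued random variable is *regular* if it is a.s. concentrated on the dual
of a weaker countably Hilbertian topology. -/
def IsRegularRV (P : Measure Ω) (X : Ω → (Φ →L[ℝ] ℝ)) : Prop :=
  ∃ θ : WCHT Φ, ∀ᵐ ω ∂P, θ.MemDual ⇑(X ω)

end ProbSection

/-- Right-continuity with left limits (càdlàg) of a path on a set `s ⊆ ℝ`. -/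
def CadlagOn {α : Type*} [TopologicalSpace α] (f : ℝ → α) (s : Set ℝ) : Prop :=
  (∀ t ∈ s, ContinuousWithinAt f (s ∩ Ici t) t) ∧
  ∀ t ∈ s, (𝓝[s ∩ Iio t] t).NeBot → ∃ l : α, Tendsto f (𝓝[s ∩ Iio t] t) (𝓝 l)

/-- Path regularity: continuous (`cts = true`) or càdlàg (`cts = false`) paths on `s`. -/
def PathReg {α : Type*} [TopologicalSpace α] (cts : Bool) (f : ℝ → α) (s : Set ℝ) : Prop :=
  if cts then ContinuousOn f s else CadlagOn f s

/-- Path regularity of a `Φ'_q`-valued path, in the dual norm `q'`. -/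
def PathRegDual (cts : Bool) (q : Seminorm ℝ Φ) (f : ℝ → (Φ →ₗ[ℝ] ℝ)) (s : Set ℝ) : Prop :=
  if cts then ∀ t ∈ s, Tendsto (fun u => dualNorm q (f u - f t)) (𝓝[s] t) (𝓝 0)
  else ((∀ t ∈ s, Tendsto (fun u => dualNorm q (f u - f t)) (𝓝[s ∩ Ici t] t) (𝓝 0)) ∧
    ∀ t ∈ s, (𝓝[s ∩ Iio t] t).NeBot → ∃ l : Φ →ₗ[ℝ] ℝ, MemDualOf q l ∧
      Tendsto (fun u => dualNorm q (f u - l)) (𝓝[s ∩ Iio t] t) (𝓝 0))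

/-- The real-valued process `Z` has a version with continuous (resp. càdlàg) paths on `s`. -/
def HasPathVersion {Ω : Type*} [MeasurableSpace Ω] (P : Measure Ω) (cts : Bool)
    (Z : ℝ → Ω → ℝ) (s : Set ℝ) : Prop :=
  ∃ W : ℝ → Ω → ℝ, (∀ t ∈ s, Measurable (W t)) ∧
    (∀ᵐ ω ∂P, PathReg cts (fun t => W t ω) s) ∧ ∀ t ∈ s, ∀ᵐ ω ∂P, W t ω = Z t ω


lemma exists_countable_dense_pair {Φ : Type*} [AddCommGroup Φ] [Module ℝ Φ]
    (p q : Seminorm ℝ Φ)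
    (hp : HasSeparableQuotient p) (hq : HasSeparableQuotient q) :
    ∃ D : Set Φ, D.Countable ∧ ∀ x : Φ, ∀ ε : ℝ, 0 < ε →
      ∃ y ∈ D, p (x - y) < ε ∧ q (x - y) < ε := by
  classical
  obtain ⟨Dp, hDpc, hDp⟩ := hp
  obtain ⟨Dq, hDqc, hDq⟩ := hq
  let f : Φ → Φ → ℕ → Φ := fun a b k =>
    if h : ∃ z : Φ, p (z - a) < 1/(k+1) ∧ q (z - b) < 1/(k+1) then h.choose else 0
  refine ⟨(fun t : Φ × Φ × ℕ => f t.1 t.2.1 t.2.2) '' (Dp ×ˢ Dq ×ˢ Set.univ),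
    (hDpc.prod (hDqc.prod Set.countable_univ)).image _, ?_⟩
  intro x ε hε
  obtain ⟨k, hk⟩ := exists_nat_one_div_lt (half_pos hε)
  have hδpos : (0:ℝ) < 1/(k+1) := by positivity
  obtain ⟨a, ha, hpa⟩ := hDp x (1/(k+1)) hδpos
  obtain ⟨b, hb, hqb⟩ := hDq x (1/(k+1)) hδpos
  have hex : ∃ z : Φ, p (z - a) < 1/(k+1) ∧ q (z - b) < 1/(k+1) := ⟨x, hpa, hqb⟩
  have hf : p (f a b k - a) < 1/(k+1) ∧ q (f a b k - b) < 1/(k+1) := by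
    simp only [f, dif_pos hex]; exact hex.choose_spec
  refine ⟨f a b k, ⟨(a, b, k), ⟨ha, hb, trivial⟩, rfl⟩, ?_, ?_⟩
  · have h1 : p (x - f a b k) ≤ p (x - a) + p (f a b k - a) := by
      calc p (x - f a b k) = p ((x - a) - (f a b k - a)) := by
            rw [sub_sub_sub_cancel_right]
        _ ≤ p (x - a) + p (f a b k - a) := map_sub_le_add p _ _
    linarith [hf.1]
  · have h1 : q (x - f a b k) ≤ q (x - b) + q (f a b k - b) := by
      calc q (x - f a b k) = q ((x - b) - (f a b k - b)) := by
            rw [sub_sub_sub_cancel_right]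
        _ ≤ q (x - b) + q (f a b k - b) := map_sub_le_add q _ _
    linarith [hf.2]

/-- If `X`, `Y` are regular `Φ'_β`-valued processes on `J = [0,∞)` or
`J = [0,T]` such that `X[φ]` is a version of `Y[φ]` for each `φ`, then `X` is a version
of `Y`; if moreover both are right-continuous, then they are indistinguishable. -/
theorem regular_version_and_indistinguishable
    {Φ : Type*} [AddCommGroup Φ] [Module ℝ Φ] [TopologicalSpace Φ]
    [IsTopologicalAddGroup Φ] [ContinuousSMul ℝ Φ]
    {Ω : Type*} [MeasurableSpace Ω] (P : Measure Ω) [IsProbabilityMeasure P] [P.IsComplete]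
    (hΦ : IsMultiHilbertian Φ)
    (J : Set ℝ) (hJ : J = Set.Ici (0 : ℝ) ∨ ∃ T : ℝ, 0 < T ∧ J = Set.Icc 0 T)
    (X Y : ℝ → Ω → (Φ →L[ℝ] ℝ))
    (hXmeas : ∀ t ∈ J, BorelMeasurable (X t)) (hYmeas : ∀ t ∈ J, BorelMeasurable (Y t))
    (hXreg : ∀ t ∈ J, IsRegularRV P (X t)) (hYreg : ∀ t ∈ J, IsRegularRV P (Y t))
    (hver : ∀ φ : Φ, ∀ t ∈ J, ∀ᵐ ω ∂P, X t ω φ = Y t ω φ) :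
    (∀ t ∈ J, ∀ᵐ ω ∂P, X t ω = Y t ω) ∧
    ((∀ᵐ ω ∂P, ∀ t ∈ J, ContinuousWithinAt (fun s => X s ω) (J ∩ Set.Ici t) t) →
      (∀ᵐ ω ∂P, ∀ t ∈ J, ContinuousWithinAt (fun s => Y s ω) (J ∩ Set.Ici t) t) →
      ∀ᵐ ω ∂P, ∀ t ∈ J, X t ω = Y t ω) := by
  classical
  have part1 : ∀ t ∈ J, ∀ᵐ ω ∂P, X t ω = Y t ω := by
    intro t ht
    obtain ⟨θX, hθX⟩ := hXreg t ht
    obtain ⟨θY, hθY⟩ := hYreg t ht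
    choose D hDc hD using fun n m : ℕ =>
      exists_countable_dense_pair (θX.p n) (θY.p m) (θX.sep n) (θY.sep m)
    have hSc : (⋃ n : ℕ, ⋃ m : ℕ, D n m).Countable :=
      Set.countable_iUnion fun n => Set.countable_iUnion fun m => hDc n m
    have hae : ∀ᵐ ω ∂P, ∀ φ ∈ ⋃ n : ℕ, ⋃ m : ℕ, D n m, X t ω φ = Y t ω φ :=
      (MeasureTheory.ae_ball_iff hSc).2 fun φ _ => hver φ t ht
    filter_upwards [hθX, hθY, hae] with ω hXω hYω heq
    obtain ⟨n, C1, hC1⟩ := hXω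
    obtain ⟨m, C2, hC2⟩ := hYω
    ext φ
    have key : ∀ ε : ℝ, 0 < ε → |X t ω φ - Y t ω φ| ≤ (|C1| + |C2|) * ε := by
      intro ε hε
      obtain ⟨y, hy, hpy, hqy⟩ := hD n m φ ε hε
      have hXy : X t ω y = Y t ω y :=
        heq y (Set.mem_iUnion.2 ⟨n, Set.mem_iUnion.2 ⟨m, hy⟩⟩)
      have h1 : |X t ω (φ - y)| ≤ |C1| * ε := by
        calc |X t ω (φ - y)| ≤ C1 * θX.p n (φ - y) := hC1 _
          _ ≤ |C1| * θX.p n (φ - y) :=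
              mul_le_mul_of_nonneg_right (le_abs_self C1) (apply_nonneg _ _)
          _ ≤ |C1| * ε := mul_le_mul_of_nonneg_left hpy.le (abs_nonneg C1)
      have h2 : |Y t ω (φ - y)| ≤ |C2| * ε := by
        calc |Y t ω (φ - y)| ≤ C2 * θY.p m (φ - y) := hC2 _
          _ ≤ |C2| * θY.p m (φ - y) :=
              mul_le_mul_of_nonneg_right (le_abs_self C2) (apply_nonneg _ _)
          _ ≤ |C2| * ε := mul_le_mul_of_nonneg_left hqy.le (abs_nonneg C2)
      have hsplit : X t ω φ - Y t ω φ = X t ω (φ - y) - Y t ω (φ - y) := by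
        have e1 : X t ω (φ - y) = X t ω φ - X t ω y := map_sub _ _ _
        have e2 : Y t ω (φ - y) = Y t ω φ - Y t ω y := map_sub _ _ _
        rw [e1, e2, hXy]; ring
      calc |X t ω φ - Y t ω φ| = |X t ω (φ - y) - Y t ω (φ - y)| := by rw [hsplit]
        _ ≤ |X t ω (φ - y)| + |Y t ω (φ - y)| := abs_sub _ _
        _ ≤ |C1| * ε + |C2| * ε := add_le_add h1 h2
        _ = (|C1| + |C2|) * ε := by ring
    have habs : |X t ω φ - Y t ω φ| ≤ 0 := by
      refine le_of_forall_pos_le_add fun ε hε => ?_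
      have hKpos : (0:ℝ) < |C1| + |C2| + 1 := by positivity
      have h := key (ε / (|C1| + |C2| + 1)) (div_pos hε hKpos)
      have : (|C1| + |C2|) * (ε / (|C1| + |C2| + 1)) ≤ ε := by
        rw [mul_div_assoc']
        rw [div_le_iff₀ hKpos]
        nlinarith [abs_nonneg C1, abs_nonneg C2]
      linarith
    have := abs_nonneg (X t ω φ - Y t ω φ)
    have : X t ω φ - Y t ω φ = 0 := abs_eq_zero.1 (le_antisymm habs this)
    linarith
  refine ⟨part1, fun hXrc hYrc => ?_⟩
  have hexists : ∃ S0 : Set ℝ, S0.Countable ∧ S0 ⊆ J ∧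
      (Set.range ((↑) : ℚ → ℝ) ∩ J ⊆ S0) ∧
      ∀ t ∈ J, t ∈ S0 ∨ ∃ t', t < t' ∧ Set.Ioo t t' ⊆ J := by
    obtain hJ1 | ⟨T, hT, hJ2⟩ := hJ
    · refine ⟨Set.range ((↑) : ℚ → ℝ) ∩ J,
        (Set.countable_range _).mono Set.inter_subset_left,
        Set.inter_subset_right, le_refl _, fun t ht => Or.inr ⟨t + 1, by linarith, ?_⟩⟩
      subst hJ1
      intro s hs
      exact le_of_lt (lt_of_le_of_lt ht hs.1)
    · refine ⟨(Set.range ((↑) : ℚ → ℝ) ∩ J) ∪ {T},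
        ((Set.countable_range _).mono Set.inter_subset_left).union
          (Set.countable_singleton T), ?_, Set.subset_union_left, fun t ht => ?_⟩
      · rintro s (hs | rfl)
        · exact hs.2
        · subst hJ2; exact ⟨hT.le, le_rfl⟩
      · rcases eq_or_lt_of_le (by subst hJ2; exact ht.2 : t ≤ T) with rfl | htT
        · exact Or.inl (Or.inr rfl)
        · refine Or.inr ⟨T, htT, ?_⟩
          subst hJ2
          intro s hs
          exact ⟨le_of_lt (lt_of_le_of_lt ht.1 hs.1), hs.2.le⟩
  obtain ⟨S0, hS0c, hS0J, hQS0, hS0⟩ := hexists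
  have haeS0 : ∀ᵐ ω ∂P, ∀ s ∈ S0, X s ω = Y s ω :=
    (MeasureTheory.ae_ball_iff hS0c).2 fun s hs => part1 s (hS0J hs)
  filter_upwards [haeS0, hXrc, hYrc] with ω heq hXc hYc
  intro t ht
  rcases hS0 t ht with hts | ⟨t', htt', hIoo⟩
  · exact heq t hts
  · set A : Set ℝ := Set.range ((↑) : ℚ → ℝ) ∩ Set.Ioo t t' with hA
    have hclos : t ∈ closure A := by
      rw [Metric.mem_closure_iff]
      intro ε hε
      obtain ⟨q, hq1, hq2⟩ := exists_rat_btwn (lt_min (by linarith : t < t + ε) htt')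
      refine ⟨(q : ℝ), ⟨⟨q, rfl⟩, hq1, lt_of_lt_of_le hq2 (min_le_right _ _)⟩, ?_⟩
      rw [Real.dist_eq, abs_sub_comm, abs_of_pos (by linarith : (0:ℝ) < (q:ℝ) - t)]
      have := lt_of_lt_of_le hq2 (min_le_left _ _)
      linarith
    haveI hne : (𝓝[A] t).NeBot := mem_closure_iff_nhdsWithin_neBot.1 hclos
    have hAJ : A ⊆ J ∩ Set.Ici t := fun s hs => ⟨hIoo hs.2, le_of_lt hs.2.1⟩
    have hX1 : Tendsto (fun s => X s ω) (𝓝[A] t) (𝓝 (X t ω)) :=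
      (hXc t ht).mono_left (nhdsWithin_mono t hAJ)
    have hY1 : Tendsto (fun s => Y s ω) (𝓝[A] t) (𝓝 (Y t ω)) :=
      (hYc t ht).mono_left (nhdsWithin_mono t hAJ)
    have hcongr : (fun s => X s ω) =ᶠ[𝓝[A] t] (fun s => Y s ω) := by
      filter_upwards [eventually_mem_nhdsWithin] with s hs
      exact heq s (hQS0 ⟨hs.1, hIoo hs.2⟩)
    exact tendsto_nhds_unique (hX1.congr' hcongr) hY1


end Paper
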